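/- If the triangle P1P2P3 is nondegenerate (the points are noncollinear) and the weight conditions (W) hold, then the function F(x,y) = Σ_{j=1}^3 m_j √((x−x_j)² + (y−y_j)²) attains its minimum over ℝ² at a unique point P* = (x*, y*); this point lies strictly inside the triangle P1P2P3 and satisfies the stationarity equations Σ_{j=1}^3 m_j (x* − x_j)/√((x*−x_j)²+(y*−y_j)²) = 0 and Σ_{j=1}^3 m_j (y* − y_j)/√((x*−x_j)²+(y*−y_j)²) = 0. -/

import Mathlib

lemma sumsq_eq_zero {u v : ℝ} (h : u^2+v^2 = 0) : u = 0 ∧ v = 0 := by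
  constructor <;> nlinarith [sq_nonneg u, sq_nonneg v]

lemma cs2 (a b c d : ℝ) : a*c + b*d ≤ Real.sqrt (a^2+b^2) * Real.sqrt (c^2+d^2) := by
  have h1 : (a*c+b*d)^2 ≤ (a^2+b^2)*(c^2+d^2) := by nlinarith [sq_nonneg (a*d-b*c)]
  calc a*c+b*d ≤ |a*c+b*d| := le_abs_self _
    _ = Real.sqrt ((a*c+b*d)^2) := (Real.sqrt_sq_eq_abs _).symm
    _ ≤ Real.sqrt ((a^2+b^2)*(c^2+d^2)) := Real.sqrt_le_sqrt h1
    _ = _ := Real.sqrt_mul (by positivity) _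

lemma mid_term (px py qx qy aj bj : ℝ) :
    Real.sqrt (((px+qx)/2 - aj)^2 + ((py+qy)/2 - bj)^2)
      ≤ (Real.sqrt ((px-aj)^2+(py-bj)^2) + Real.sqrt ((qx-aj)^2+(qy-bj)^2))/2 := by
  have hA := Real.sq_sqrt (show (0:ℝ) ≤ (px-aj)^2+(py-bj)^2 by positivity)
  have hB := Real.sq_sqrt (show (0:ℝ) ≤ (qx-aj)^2+(qy-bj)^2 by positivity)
  have hcs := cs2 (px-aj) (py-bj) (qx-aj) (qy-bj)
  have hle : ((px+qx)/2 - aj)^2 + ((py+qy)/2 - bj)^2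
      ≤ ((Real.sqrt ((px-aj)^2+(py-bj)^2) + Real.sqrt ((qx-aj)^2+(qy-bj)^2))/2)^2 := by
    nlinarith
  calc Real.sqrt (((px+qx)/2 - aj)^2 + ((py+qy)/2 - bj)^2)
      ≤ Real.sqrt (((Real.sqrt ((px-aj)^2+(py-bj)^2) + Real.sqrt ((qx-aj)^2+(qy-bj)^2))/2)^2) :=
        Real.sqrt_le_sqrt hle
    _ = _ := Real.sqrt_sq (by positivity)

lemma mid_term_eq (px py qx qy aj bj : ℝ)
    (h : Real.sqrt (((px+qx)/2 - aj)^2 + ((py+qy)/2 - bj)^2)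
      = (Real.sqrt ((px-aj)^2+(py-bj)^2) + Real.sqrt ((qx-aj)^2+(qy-bj)^2))/2) :
    (px-aj)*(qy-bj) - (py-bj)*(qx-aj) = 0 := by
  have hA := Real.sq_sqrt (show (0:ℝ) ≤ (px-aj)^2+(py-bj)^2 by positivity)
  have hB := Real.sq_sqrt (show (0:ℝ) ≤ (qx-aj)^2+(qy-bj)^2 by positivity)
  have hC := Real.sq_sqrt (show (0:ℝ) ≤ ((px+qx)/2 - aj)^2 + ((py+qy)/2 - bj)^2 by positivity)
  rw [h] at hC
  have hdot : (px-aj)*(qx-aj) + (py-bj)*(qy-bj)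
      = Real.sqrt ((px-aj)^2+(py-bj)^2) * Real.sqrt ((qx-aj)^2+(qy-bj)^2) := by nlinarith
  have hsq : ((px-aj)*(qx-aj) + (py-bj)*(qy-bj))^2
      = ((px-aj)^2+(py-bj)^2)*((qx-aj)^2+(qy-bj)^2) := by
    rw [hdot, mul_pow, hA, hB]
  have h0 : ((px-aj)*(qy-bj) - (py-bj)*(qx-aj))^2 = 0 := by nlinarith
  exact pow_eq_zero_iff (n := 2) (by norm_num) |>.mp h0

lemma sqrt_quad_le (r e : ℝ) (hr : 0 < r) (he : 0 ≤ r^2 + e) :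
    Real.sqrt (r^2 + e) ≤ r + e/(2*r) := by
  have hR : 0 ≤ r + e/(2*r) := by
    have h1 : r + e/(2*r) = (2*r^2 + e)/(2*r) := by field_simp
    rw [h1]
    apply div_nonneg _ (by linarith)
    nlinarith
  have hle : r^2 + e ≤ (r + e/(2*r))^2 := by
    have h2 : (r + e/(2*r))^2 = r^2 + e + (e/(2*r))^2 := by field_simp; ring
    nlinarith [sq_nonneg (e/(2*r))]
  calc Real.sqrt (r^2+e) ≤ Real.sqrt ((r + e/(2*r))^2) := Real.sqrt_le_sqrt hle
    _ = _ := Real.sqrt_sq hR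

lemma hasDerivAt_dx (m a b y : ℝ) {x : ℝ} (h : (x-a)^2+(y-b)^2 ≠ 0) :
    HasDerivAt (fun t => m * Real.sqrt ((t-a)^2 + (y-b)^2))
      (m * (x-a) / Real.sqrt ((x-a)^2+(y-b)^2)) x := by
  have h1 : HasDerivAt (fun t : ℝ => (t-a)^2 + (y-b)^2) (2*(x-a)) x := by
    simpa using (((hasDerivAt_id x).sub_const a).pow 2).add_const ((y-b)^2)
  have h2 := (Real.hasDerivAt_sqrt h).comp x h1
  have h3 := h2.const_mul m
  convert h3 using 1 <;> try rfl
  have hs : Real.sqrt ((x-a)^2+(y-b)^2) ≠ 0 := by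
    rw [Real.sqrt_ne_zero' ]
    rcases lt_or_eq_of_le (show (0:ℝ) ≤ (x-a)^2+(y-b)^2 by positivity) with h'|h'
    · exact h'
    · exact absurd h'.symm h
  field_simp

lemma hasDerivAt_dy (m a b x : ℝ) {y : ℝ} (h : (x-a)^2+(y-b)^2 ≠ 0) :
    HasDerivAt (fun t => m * Real.sqrt ((x-a)^2 + (t-b)^2))
      (m * (y-b) / Real.sqrt ((x-a)^2+(y-b)^2)) y := by
  have h1 : HasDerivAt (fun t : ℝ => (x-a)^2 + (t-b)^2) (2*(y-b)) y := by
    simpa using ((((hasDerivAt_id y).sub_const b).pow 2).const_add ((x-a)^2))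
  have h2 := (Real.hasDerivAt_sqrt h).comp y h1
  have h3 := h2.const_mul m
  convert h3 using 1 <;> try rfl
  have hs : Real.sqrt ((x-a)^2+(y-b)^2) ≠ 0 := by
    rw [Real.sqrt_ne_zero' ]
    rcases lt_or_eq_of_le (show (0:ℝ) ≤ (x-a)^2+(y-b)^2 by positivity) with h'|h'
    · exact h'
    · exact absurd h'.symm h
  field_simp

set_option maxHeartbeats 1000000 in
lemma descend (a b c2 d2 c3 d3 m1 m2 m3 r2 r3 : ℝ)
    (hm1 : 0 < m1) (hm2 : 0 < m2) (hm3 : 0 < m3)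
    (hr2 : r2 = Real.sqrt ((c2-a)^2+(d2-b)^2)) (hr3 : r3 = Real.sqrt ((c3-a)^2+(d3-b)^2))
    (h2 : 0 < r2) (h3 : 0 < r3)
    (hW : m1^2 < m2^2 + m3^2 + 2*m2*m3*(((c2-a)*(c3-a)+(d2-b)*(d3-b))/(r2*r3))) :
    ∃ x y, m1*Real.sqrt ((x-a)^2+(y-b)^2) + m2*Real.sqrt ((x-c2)^2+(y-d2)^2)
        + m3*Real.sqrt ((x-c3)^2+(y-d3)^2) < m2*r2 + m3*r3 := by
  have hr2sq : r2^2 = (c2-a)^2+(d2-b)^2 := by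
    rw [hr2]; exact Real.sq_sqrt (by positivity)
  have hr3sq : r3^2 = (c3-a)^2+(d3-b)^2 := by
    rw [hr3]; exact Real.sq_sqrt (by positivity)
  obtain ⟨sx, hsx⟩ : ∃ s : ℝ, s = m2*(c2-a)/r2 + m3*(c3-a)/r3 := ⟨_, rfl⟩
  obtain ⟨sy, hsy⟩ : ∃ s : ℝ, s = m2*(d2-b)/r2 + m3*(d3-b)/r3 := ⟨_, rfl⟩
  obtain ⟨σ2, hσ2⟩ : ∃ s : ℝ, s = sx^2 + sy^2 := ⟨_, rfl⟩
  have hσ2eq : σ2 = m2^2 + m3^2 + 2*m2*m3*(((c2-a)*(c3-a)+(d2-b)*(d3-b))/(r2*r3)) := by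
    rw [hσ2, hsx, hsy]
    field_simp
    linear_combination (-(m2^2*r3^2)) * hr2sq + (-(m3^2*r2^2)) * hr3sq
  have hkey : m2*((c2-a)*sx+(d2-b)*sy)/r2 + m3*((c3-a)*sx+(d3-b)*sy)/r3 = σ2 := by
    rw [hσ2, hsx, hsy]; field_simp; ring
  have hσ2pos : 0 < σ2 := by nlinarith [sq_nonneg m1, hσ2eq, hW]
  obtain ⟨σ, hσ⟩ : ∃ s : ℝ, s = Real.sqrt σ2 := ⟨_, rfl⟩
  have hσsq : σ^2 = σ2 := by rw [hσ]; exact Real.sq_sqrt hσ2pos.le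
  have hσpos : 0 < σ := by rw [hσ]; exact Real.sqrt_pos.mpr hσ2pos
  have hm1σ : m1 < σ := by nlinarith [hσsq, hσ2eq, hW]
  obtain ⟨c, hc⟩ : ∃ s : ℝ, s = σ2 - m1*σ := ⟨_, rfl⟩
  have hcpos : 0 < c := by rw [hc, ← hσsq]; nlinarith
  obtain ⟨K, hK⟩ : ∃ s : ℝ, s = σ2*(m2/(2*r2)+m3/(2*r3)) := ⟨_, rfl⟩
  have hKpos : 0 < K := by rw [hK]; positivity
  obtain ⟨t, htdef⟩ : ∃ s : ℝ, s = c/(2*K) := ⟨_, rfl⟩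
  have htpos : 0 < t := by rw [htdef]; positivity
  refine ⟨a + t*sx, b + t*sy, ?_⟩
  obtain ⟨e2, he2⟩ : ∃ s : ℝ, s = t^2*σ2 - 2*t*((c2-a)*sx+(d2-b)*sy) := ⟨_, rfl⟩
  obtain ⟨e3, he3⟩ : ∃ s : ℝ, s = t^2*σ2 - 2*t*((c3-a)*sx+(d3-b)*sy) := ⟨_, rfl⟩
  have harg1 : (a+t*sx-a)^2+(b+t*sy-b)^2 = (t*σ)^2 := by
    rw [mul_pow, hσsq, hσ2]; ring
  have hT1 : Real.sqrt ((a+t*sx-a)^2+(b+t*sy-b)^2) = t*σ := by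
    rw [harg1]; exact Real.sqrt_sq (by positivity)
  have harg2 : (a+t*sx-c2)^2+(b+t*sy-d2)^2 = r2^2 + e2 := by
    rw [he2, hσ2]; linear_combination -hr2sq
  have harg3 : (a+t*sx-c3)^2+(b+t*sy-d3)^2 = r3^2 + e3 := by
    rw [he3, hσ2]; linear_combination -hr3sq
  have hpos2 : 0 ≤ r2^2 + e2 := by rw [← harg2]; positivity
  have hpos3 : 0 ≤ r3^2 + e3 := by rw [← harg3]; positivity
  have hT2 : Real.sqrt ((a+t*sx-c2)^2+(b+t*sy-d2)^2) ≤ r2 + e2/(2*r2) := by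
    rw [harg2]; exact sqrt_quad_le r2 e2 h2 hpos2
  have hT3 : Real.sqrt ((a+t*sx-c3)^2+(b+t*sy-d3)^2) ≤ r3 + e3/(2*r3) := by
    rw [harg3]; exact sqrt_quad_le r3 e3 h3 hpos3
  have hsum : m2*e2/(2*r2) + m3*e3/(2*r3)
      = t^2*K - t*(m2*((c2-a)*sx+(d2-b)*sy)/r2 + m3*((c3-a)*sx+(d3-b)*sy)/r3) := by
    rw [he2, he3, hK]; field_simp; ring
  rw [hkey] at hsum
  have h2K : t^2*K = t*c/2 := by
    rw [htdef]; field_simp [hKpos.ne']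
  have hv : m1*(t*σ) + (m2*e2/(2*r2) + m3*e3/(2*r3)) = -(t*c)/2 := by
    rw [hsum, h2K, hc]; ring
  have htc : 0 < t*c := mul_pos htpos hcpos
  have hdrop : m1*(t*σ) + m2*e2/(2*r2) + m3*e3/(2*r3) < 0 := by linarith [hv]
  have hb2 := mul_le_mul_of_nonneg_left hT2 hm2.le
  have hb3 := mul_le_mul_of_nonneg_left hT3 hm3.le
  have hexp2 : m2*(r2 + e2/(2*r2)) = m2*r2 + m2*e2/(2*r2) := by ring
  have hexp3 : m3*(r3 + e3/(2*r3)) = m3*r3 + m3*e3/(2*r3) := by ring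
  rw [hT1]
  linarith


lemma exists_min (x1 y1 x2 y2 x3 y3 m1 m2 m3 : ℝ)
    (hm1 : 0 < m1) (hm2 : 0 < m2) (hm3 : 0 < m3) :
    ∃ p : ℝ × ℝ, ∀ q : ℝ × ℝ,
      m1*Real.sqrt ((p.1-x1)^2+(p.2-y1)^2) + m2*Real.sqrt ((p.1-x2)^2+(p.2-y2)^2)
        + m3*Real.sqrt ((p.1-x3)^2+(p.2-y3)^2)
      ≤ m1*Real.sqrt ((q.1-x1)^2+(q.2-y1)^2) + m2*Real.sqrt ((q.1-x2)^2+(q.2-y2)^2)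
        + m3*Real.sqrt ((q.1-x3)^2+(q.2-y3)^2) := by
  have hcont : Continuous (fun q : ℝ × ℝ =>
      m1*Real.sqrt ((q.1-x1)^2+(q.2-y1)^2) + m2*Real.sqrt ((q.1-x2)^2+(q.2-y2)^2)
        + m3*Real.sqrt ((q.1-x3)^2+(q.2-y3)^2)) := by
    apply Continuous.add
    apply Continuous.add
    all_goals
      exact continuous_const.mul
        (((continuous_fst.sub continuous_const).pow 2).add
          ((continuous_snd.sub continuous_const).pow 2)).sqrt
  apply hcont.exists_forall_le
  have hge : ∀ q : ℝ × ℝ,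
      m1*(‖q‖ - ‖((x1,y1) : ℝ × ℝ)‖) ≤
      m1*Real.sqrt ((q.1-x1)^2+(q.2-y1)^2) + m2*Real.sqrt ((q.1-x2)^2+(q.2-y2)^2)
        + m3*Real.sqrt ((q.1-x3)^2+(q.2-y3)^2) := by
    intro q
    have h1 : ‖q - ((x1,y1) : ℝ × ℝ)‖ ≤ Real.sqrt ((q.1-x1)^2+(q.2-y1)^2) := by
      rw [Prod.norm_def]
      apply max_le
      · rw [Prod.fst_sub, Real.norm_eq_abs, ← Real.sqrt_sq_eq_abs]
        exact Real.sqrt_le_sqrt (by simp; positivity)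
      · rw [Prod.snd_sub, Real.norm_eq_abs, ← Real.sqrt_sq_eq_abs]
        exact Real.sqrt_le_sqrt (by simp; positivity)
    have h2 : ‖q‖ - ‖((x1,y1) : ℝ × ℝ)‖ ≤ ‖q - ((x1,y1) : ℝ × ℝ)‖ := norm_sub_norm_le _ _
    have h3 := mul_le_mul_of_nonneg_left (le_trans h2 h1) hm1.le
    have h4 : 0 ≤ m2*Real.sqrt ((q.1-x2)^2+(q.2-y2)^2) := by positivity
    have h5 : 0 ≤ m3*Real.sqrt ((q.1-x3)^2+(q.2-y3)^2) := by positivity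
    linarith
  have h0 : Filter.Tendsto (fun q : ℝ × ℝ => ‖q‖) (Filter.cocompact _) Filter.atTop :=
    tendsto_norm_cocompact_atTop
  have h1 := Filter.tendsto_atTop_add_const_right _ (-‖((x1,y1) : ℝ × ℝ)‖) h0
  have h2 := h1.const_mul_atTop hm1
  apply Filter.tendsto_atTop_mono _ h2
  intro q
  have := hge q
  simpa [sub_eq_add_neg] using this


set_option maxHeartbeats 1000000 in
theorem generalized_fermat_torricelli_existence_uniqueness
    (x1 y1 x2 y2 x3 y3 m1 m2 m3 : ℝ)
    (hm1 : 0 < m1) (hm2 : 0 < m2) (hm3 : 0 < m3)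
    (hnd : x1*y2 + x2*y3 + x3*y1 - x1*y3 - x3*y2 - x2*y1 ≠ 0)
    (r12 r13 r23 : ℝ)
    (hr12 : r12 = Real.sqrt ((x1-x2)^2 + (y1-y2)^2))
    (hr13 : r13 = Real.sqrt ((x1-x3)^2 + (y1-y3)^2))
    (hr23 : r23 = Real.sqrt ((x2-x3)^2 + (y2-y3)^2))
    (cosα1 cosα2 cosα3 : ℝ)
    (hc1 : cosα1 = ((x2-x1)*(x3-x1) + (y2-y1)*(y3-y1)) / (r12 * r13))
    (hc2 : cosα2 = ((x1-x2)*(x3-x2) + (y1-y2)*(y3-y2)) / (r12 * r23))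
    (hc3 : cosα3 = ((x1-x3)*(x2-x3) + (y1-y3)*(y2-y3)) / (r13 * r23))
    (hW1 : m1^2 < m2^2 + m3^2 + 2*m2*m3*cosα1)
    (hW2 : m2^2 < m1^2 + m3^2 + 2*m1*m3*cosα2)
    (hW3 : m3^2 < m1^2 + m2^2 + 2*m1*m2*cosα3)
    (F : ℝ → ℝ → ℝ)
    (hF : ∀ x y, F x y =
        m1 * Real.sqrt ((x-x1)^2 + (y-y1)^2)
      + m2 * Real.sqrt ((x-x2)^2 + (y-y2)^2)
      + m3 * Real.sqrt ((x-x3)^2 + (y-y3)^2)) :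
    ∃ xs ys : ℝ,
      (∀ x y : ℝ, F xs ys ≤ F x y) ∧
      (∀ x y : ℝ, (∀ u v : ℝ, F x y ≤ F u v) → (x, y) = (xs, ys)) ∧
      (∃ l1 l2 l3 : ℝ, 0 < l1 ∧ 0 < l2 ∧ 0 < l3 ∧ l1 + l2 + l3 = 1 ∧
        xs = l1*x1 + l2*x2 + l3*x3 ∧ ys = l1*y1 + l2*y2 + l3*y3) ∧
      (m1*(xs-x1)/Real.sqrt ((xs-x1)^2 + (ys-y1)^2)
        + m2*(xs-x2)/Real.sqrt ((xs-x2)^2 + (ys-y2)^2)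
        + m3*(xs-x3)/Real.sqrt ((xs-x3)^2 + (ys-y3)^2) = 0) ∧
      (m1*(ys-y1)/Real.sqrt ((xs-x1)^2 + (ys-y1)^2)
        + m2*(ys-y2)/Real.sqrt ((xs-x2)^2 + (ys-y2)^2)
        + m3*(ys-y3)/Real.sqrt ((xs-x3)^2 + (ys-y3)^2) = 0) := by
  -- distinctness of vertices
  have h12ne : (x1-x2)^2+(y1-y2)^2 ≠ 0 := by
    intro h0
    have hx := sub_eq_zero.mp (sumsq_eq_zero h0).1
    have hy := sub_eq_zero.mp (sumsq_eq_zero h0).2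
    exact hnd (by rw [hx, hy]; ring)
  have h13ne : (x1-x3)^2+(y1-y3)^2 ≠ 0 := by
    intro h0
    have hx := sub_eq_zero.mp (sumsq_eq_zero h0).1
    have hy := sub_eq_zero.mp (sumsq_eq_zero h0).2
    exact hnd (by rw [hx, hy]; ring)
  have h23ne : (x2-x3)^2+(y2-y3)^2 ≠ 0 := by
    intro h0
    have hx := sub_eq_zero.mp (sumsq_eq_zero h0).1
    have hy := sub_eq_zero.mp (sumsq_eq_zero h0).2
    exact hnd (by rw [hx, hy]; ring)
  have hr12pos : 0 < r12 := by
    rw [hr12]; exact Real.sqrt_pos.mpr (lt_of_le_of_ne (by positivity) (Ne.symm h12ne))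
  have hr13pos : 0 < r13 := by
    rw [hr13]; exact Real.sqrt_pos.mpr (lt_of_le_of_ne (by positivity) (Ne.symm h13ne))
  have hr23pos : 0 < r23 := by
    rw [hr23]; exact Real.sqrt_pos.mpr (lt_of_le_of_ne (by positivity) (Ne.symm h23ne))
  -- existence of a global minimizer
  obtain ⟨p, hp⟩ := exists_min x1 y1 x2 y2 x3 y3 m1 m2 m3 hm1 hm2 hm3
  have hmin : ∀ x y : ℝ, F p.1 p.2 ≤ F x y := by
    intro x y; rw [hF, hF]; simpa using hp (x, y)
  -- minimizer is not a vertex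
  have hd1 : (p.1-x1)^2+(p.2-y1)^2 ≠ 0 := by
    intro h0
    have hpx := sub_eq_zero.mp (sumsq_eq_zero h0).1
    have hpy := sub_eq_zero.mp (sumsq_eq_zero h0).2
    have hW1' := hW1; rw [hc1] at hW1'
    obtain ⟨xx, yy, hlt⟩ := descend x1 y1 x2 y2 x3 y3 m1 m2 m3 r12 r13 hm1 hm2 hm3
      (by rw [hr12]; congr 1; ring) (by rw [hr13]; congr 1; ring) hr12pos hr13pos hW1'
    have h1 := hmin xx yy
    rw [hpx, hpy, hF, hF,
      show (x1-x1)^2+(y1-y1)^2 = (0:ℝ) by ring, Real.sqrt_zero, mul_zero, zero_add,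
      ← hr12, ← hr13] at h1
    linarith
  have hd2 : (p.1-x2)^2+(p.2-y2)^2 ≠ 0 := by
    intro h0
    have hpx := sub_eq_zero.mp (sumsq_eq_zero h0).1
    have hpy := sub_eq_zero.mp (sumsq_eq_zero h0).2
    have hW2' := hW2; rw [hc2] at hW2'
    obtain ⟨xx, yy, hlt⟩ := descend x2 y2 x1 y1 x3 y3 m2 m1 m3 r12 r23 hm2 hm1 hm3
      hr12 (by rw [hr23]; congr 1; ring) hr12pos hr23pos hW2'
    have h1 := hmin xx yy
    rw [hpx, hpy, hF, hF,
      show (x2-x2)^2+(y2-y2)^2 = (0:ℝ) by ring, Real.sqrt_zero, mul_zero,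
      show (x2-x1)^2+(y2-y1)^2 = (x1-x2)^2+(y1-y2)^2 by ring, ← hr12, ← hr23] at h1
    linarith
  have hd3 : (p.1-x3)^2+(p.2-y3)^2 ≠ 0 := by
    intro h0
    have hpx := sub_eq_zero.mp (sumsq_eq_zero h0).1
    have hpy := sub_eq_zero.mp (sumsq_eq_zero h0).2
    have hW3' := hW3; rw [hc3] at hW3'
    obtain ⟨xx, yy, hlt⟩ := descend x3 y3 x1 y1 x2 y2 m3 m1 m2 r13 r23 hm3 hm1 hm2
      hr13 hr23 hr13pos hr23pos hW3'
    have h1 := hmin xx yy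
    rw [hpx, hpy, hF, hF,
      show (x3-x3)^2+(y3-y3)^2 = (0:ℝ) by ring, Real.sqrt_zero, mul_zero,
      show (x3-x1)^2+(y3-y1)^2 = (x1-x3)^2+(y1-y3)^2 by ring, ← hr13,
      show (x3-x2)^2+(y3-y2)^2 = (x2-x3)^2+(y2-y3)^2 by ring, ← hr23] at h1
    linarith
  -- stationarity
  have hlmx : IsLocalMin (fun t => m1*Real.sqrt ((t-x1)^2+(p.2-y1)^2)
      + m2*Real.sqrt ((t-x2)^2+(p.2-y2)^2) + m3*Real.sqrt ((t-x3)^2+(p.2-y3)^2)) p.1 := by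
    apply Filter.Eventually.of_forall
    intro t
    have h1 := hmin t p.2
    rw [hF, hF] at h1
    exact h1
  have hdx := ((hasDerivAt_dx m1 x1 y1 p.2 hd1).add (hasDerivAt_dx m2 x2 y2 p.2 hd2)).add
    (hasDerivAt_dx m3 x3 y3 p.2 hd3)
  have hx0 := hlmx.hasDerivAt_eq_zero hdx
  have hlmy : IsLocalMin (fun t => m1*Real.sqrt ((p.1-x1)^2+(t-y1)^2)
      + m2*Real.sqrt ((p.1-x2)^2+(t-y2)^2) + m3*Real.sqrt ((p.1-x3)^2+(t-y3)^2)) p.2 := by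
    apply Filter.Eventually.of_forall
    intro t
    have h1 := hmin p.1 t
    rw [hF, hF] at h1
    exact h1
  have hdy := ((hasDerivAt_dy m1 x1 y1 p.1 hd1).add (hasDerivAt_dy m2 x2 y2 p.1 hd2)).add
    (hasDerivAt_dy m3 x3 y3 p.1 hd3)
  have hy0 := hlmy.hasDerivAt_eq_zero hdy
  -- barycentric coordinates
  obtain ⟨s1, hs1⟩ : ∃ s : ℝ, s = Real.sqrt ((p.1-x1)^2+(p.2-y1)^2) := ⟨_, rfl⟩
  obtain ⟨s2, hs2⟩ : ∃ s : ℝ, s = Real.sqrt ((p.1-x2)^2+(p.2-y2)^2) := ⟨_, rfl⟩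
  obtain ⟨s3, hs3⟩ : ∃ s : ℝ, s = Real.sqrt ((p.1-x3)^2+(p.2-y3)^2) := ⟨_, rfl⟩
  have hs1p : 0 < s1 := by
    rw [hs1]; exact Real.sqrt_pos.mpr (lt_of_le_of_ne (by positivity) (Ne.symm hd1))
  have hs2p : 0 < s2 := by
    rw [hs2]; exact Real.sqrt_pos.mpr (lt_of_le_of_ne (by positivity) (Ne.symm hd2))
  have hs3p : 0 < s3 := by
    rw [hs3]; exact Real.sqrt_pos.mpr (lt_of_le_of_ne (by positivity) (Ne.symm hd3))
  have hx0' : m1*(p.1-x1)/s1 + m2*(p.1-x2)/s2 + m3*(p.1-x3)/s3 = 0 := by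
    rw [hs1, hs2, hs3]; exact hx0
  have hy0' : m1*(p.2-y1)/s1 + m2*(p.2-y2)/s2 + m3*(p.2-y3)/s3 = 0 := by
    rw [hs1, hs2, hs3]; exact hy0
  obtain ⟨S, hS⟩ : ∃ s : ℝ, s = m1/s1 + m2/s2 + m3/s3 := ⟨_, rfl⟩
  have hSpos : 0 < S := by
    rw [hS]
    exact add_pos (add_pos (div_pos hm1 hs1p) (div_pos hm2 hs2p)) (div_pos hm3 hs3p)
  refine ⟨p.1, p.2, hmin, ?_, ⟨(m1/s1)/S, (m2/s2)/S, (m3/s3)/S,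
    div_pos (div_pos hm1 hs1p) hSpos, div_pos (div_pos hm2 hs2p) hSpos,
    div_pos (div_pos hm3 hs3p) hSpos, ?_, ?_, ?_⟩, hx0, hy0⟩
  · -- uniqueness
    intro x y hq
    have t1 := mid_term p.1 p.2 x y x1 y1
    have t2 := mid_term p.1 p.2 x y x2 y2
    have t3 := mid_term p.1 p.2 x y x3 y3
    have hup := hmin ((p.1+x)/2) ((p.2+y)/2)
    have heqv : F x y = F p.1 p.2 := le_antisymm (hq p.1 p.2) (hmin x y)
    rw [hF, hF] at hup
    rw [hF, hF] at heqv
    have b1 := mul_le_mul_of_nonneg_left t1 hm1.le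
    have b2 := mul_le_mul_of_nonneg_left t2 hm2.le
    have b3 := mul_le_mul_of_nonneg_left t3 hm3.le
    have e1 : Real.sqrt (((p.1+x)/2 - x1)^2 + ((p.2+y)/2 - y1)^2)
        = (Real.sqrt ((p.1-x1)^2+(p.2-y1)^2) + Real.sqrt ((x-x1)^2+(y-y1)^2))/2 :=
      mul_left_cancel₀ hm1.ne' (le_antisymm b1 (by linarith))
    have e2 : Real.sqrt (((p.1+x)/2 - x2)^2 + ((p.2+y)/2 - y2)^2)
        = (Real.sqrt ((p.1-x2)^2+(p.2-y2)^2) + Real.sqrt ((x-x2)^2+(y-y2)^2))/2 :=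
      mul_left_cancel₀ hm2.ne' (le_antisymm b2 (by linarith))
    have e3 : Real.sqrt (((p.1+x)/2 - x3)^2 + ((p.2+y)/2 - y3)^2)
        = (Real.sqrt ((p.1-x3)^2+(p.2-y3)^2) + Real.sqrt ((x-x3)^2+(y-y3)^2))/2 :=
      mul_left_cancel₀ hm3.ne' (le_antisymm b3 (by linarith))
    have c1 := mid_term_eq p.1 p.2 x y x1 y1 e1
    have c2 := mid_term_eq p.1 p.2 x y x2 y2 e2
    have c3 := mid_term_eq p.1 p.2 x y x3 y3 e3
    have ha : (p.2 - y) * (x1*y2 + x2*y3 + x3*y1 - x1*y3 - x3*y2 - x2*y1) = 0 := by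
      linear_combination (y2-y3)*c1 + (y3-y1)*c2 + (y1-y2)*c3
    have hb : (x - p.1) * (x1*y2 + x2*y3 + x3*y1 - x1*y3 - x3*y2 - x2*y1) = 0 := by
      linear_combination (x3-x2)*c1 + (x1-x3)*c2 + (x2-x1)*c3
    have hy' : p.2 = y := by
      rcases mul_eq_zero.mp ha with h | h
      · exact sub_eq_zero.mp h
      · exact absurd h hnd
    have hx' : x = p.1 := by
      rcases mul_eq_zero.mp hb with h | h
      · exact sub_eq_zero.mp h
      · exact absurd h hnd
    rw [hx', ← hy']
  · rw [← add_div, ← add_div, ← hS]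
    exact div_self hSpos.ne'
  · -- x barycentric
    have hx1 : p.1 * S = m1/s1*x1 + m2/s2*x2 + m3/s3*x3 := by
      rw [hS]
      field_simp
      field_simp at hx0'
      linear_combination hx0'
    have hre : (m1/s1)/S*x1 + (m2/s2)/S*x2 + (m3/s3)/S*x3
        = (m1/s1*x1 + m2/s2*x2 + m3/s3*x3)/S := by ring
    rw [hre, eq_div_iff hSpos.ne']
    linear_combination hx1
  · -- y barycentric
    have hy1 : p.2 * S = m1/s1*y1 + m2/s2*y2 + m3/s3*y3 := by
      rw [hS]
      field_simp
      field_simp at hy0'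
      linear_combination hy0'
    have hre : (m1/s1)/S*y1 + (m2/s2)/S*y2 + (m3/s3)/S*y3
        = (m1/s1*y1 + m2/s2*y2 + m3/s3*y3)/S := by ring
    rw [hre, eq_div_iff hSpos.ne']
    linear_combination hy1
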